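/- Define γ(0) = 1 and, for p ≥ 1, γ(p) = p^p/(p+1)!. Then there exists r > 0 such that for every w ∈ ℂ with |w| < r, the series Σ_{p=0}^∞ γ(p)·(w·e^{−w})^{p+1} converges and equals 1 − e^{−w}. (Equivalently: the function L(t) = t/(1 − Σ_{p=0}^∞ γ(p)·t^{p+1}) is defined, analytic and invertible with respect to composition in a neighborhood of 0, with inverse L^{⟨−1⟩}(z) = z·e^{−z}.) -/

import Mathlib

open Finset


/-- `γ(p) = p^p/(p+1)!`, with `γ(0) = 1` (using the convention `0⁰ = 1`). -/
noncomputable def gammaCoeff (p : ℕ) : ℝ :=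
  (p : ℝ) ^ p / ((p + 1).factorial : ℝ)


lemma core : ∀ d n : ℕ, d < n →
    ∑ j ∈ Finset.range (n+1), (-1:ℂ)^j * (n.choose j) * (j:ℂ)^d = 0 := by
  intro d
  induction d using Nat.strong_induction_on with
  | _ d IH =>
    intro n hdn
    match d with
    | 0 =>
      have h := Int.alternating_sum_range_choose_of_ne (n := n) (by omega)
      have h2 : ((∑ i ∈ range (n + 1), (-1 : ℤ) ^ i * ↑(n.choose i) : ℤ) : ℂ) = 0 := by
        rw [h]; simp
      push_cast at h2
      simpa using h2
    | d + 1 =>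
      obtain ⟨m, rfl⟩ : ∃ m, n = m + 1 := ⟨n - 1, by omega⟩
      have hdm : d < m := by omega
      rw [Finset.sum_range_succ']
      have hterm : ∀ j ∈ range (m + 1),
          (-1:ℂ)^(j+1) * (((m+1).choose (j+1) : ℕ) : ℂ) * (((j:ℕ)+1 : ℕ) : ℂ)^(d+1)
          = (-((m:ℂ)+1)) * ((-1:ℂ)^j * (m.choose j) * ((j:ℂ)+1)^d) := by
        intro j _
        have h1 : (m + 1) * m.choose j = (m+1).choose (j+1) * (j+1) :=
          Nat.add_one_mul_choose_eq m j
        have h1' : ((m:ℂ) + 1) * (m.choose j : ℂ) = ((m+1).choose (j+1) : ℂ) * ((j:ℂ)+1) := by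
          exact_mod_cast congrArg (Nat.cast : ℕ → ℂ) h1
        push_cast
        linear_combination ((-1:ℂ)^j * ((j:ℂ)+1)^d) * h1'
      rw [Finset.sum_congr rfl hterm, ← Finset.mul_sum]
      have hexp : ∀ j ∈ range (m+1), (-1:ℂ)^j * (m.choose j) * ((j:ℂ)+1)^d
          = ∑ e ∈ range (d+1), (d.choose e : ℂ) * ((-1:ℂ)^j * (m.choose j) * (j:ℂ)^e) := by
        intro j _
        rw [add_pow]
        rw [Finset.mul_sum]
        refine Finset.sum_congr rfl fun e _ => by ring
      rw [Finset.sum_congr rfl hexp, Finset.sum_comm]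
      have hz : ∀ e ∈ range (d+1),
          ∑ j ∈ range (m+1), (d.choose e : ℂ) * ((-1:ℂ)^j * (m.choose j) * (j:ℂ)^e) = 0 := by
        intro e he
        rw [← Finset.mul_sum, IH e (by simp at he; omega) m (by simp at he; omega), mul_zero]
      rw [Finset.sum_congr rfl hz]
      simp

lemma identB (m : ℕ) :
    ∑ p ∈ Finset.range (m+1), (-1:ℂ)^(m-p) * ((m+1).choose (p+1) : ℂ) * (p:ℂ)^m = 1 := by
  have hsq : ∀ j : ℕ, ((-1:ℂ)^j) * ((-1:ℂ)^j) = 1 := by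
    intro j; rw [← pow_add, ← two_mul, pow_mul]; simp
  have hsign : ∀ j, j ≤ m+1 → (-1:ℂ)^(m+1-j) = (-1)^(m+1) * (-1)^j := by
    intro j hj
    have h1 : (-1:ℂ)^(m+1-j) * (-1)^j = (-1)^(m+1) := by
      rw [← pow_add, Nat.sub_add_cancel hj]
    calc (-1:ℂ)^(m+1-j) = (-1:ℂ)^(m+1-j) * ((-1:ℂ)^j * (-1:ℂ)^j) := by rw [hsq, mul_one]
      _ = ((-1:ℂ)^(m+1-j) * (-1)^j) * (-1)^j := by ring
      _ = (-1)^(m+1) * (-1)^j := by rw [h1]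
  have hG : ∑ j ∈ Finset.range (m+2), (-1:ℂ)^(m+1-j) * ((m+1).choose j : ℂ) * ((j:ℂ)-1)^m
      = 0 := by
    have step : ∀ j ∈ Finset.range (m+2),
        (-1:ℂ)^(m+1-j) * ((m+1).choose j : ℂ) * ((j:ℂ)-1)^m
        = ∑ e ∈ Finset.range (m+1), ((-1:ℂ)^(m+1) * ((m.choose e : ℂ) * (-1:ℂ)^(m-e)))
            * ((-1:ℂ)^j * ((m+1).choose j : ℂ) * (j:ℂ)^e) := by
      intro j hj
      rw [hsign j (by simp at hj; omega)]
      have hpow : ((j:ℂ)-1)^m = ∑ e ∈ Finset.range (m+1),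
          (j:ℂ)^e * (-1:ℂ)^(m-e) * (m.choose e : ℂ) := by
        have := add_pow (j:ℂ) (-1) m
        simpa [sub_eq_add_neg] using this
      rw [hpow, Finset.mul_sum]
      refine Finset.sum_congr rfl fun e _ => by ring
    rw [Finset.sum_congr rfl step, Finset.sum_comm]
    refine Finset.sum_eq_zero fun e he => ?_
    rw [← Finset.mul_sum, core e (m+1) (by simp at he; omega), mul_zero]
  rw [Finset.sum_range_succ'] at hG
  have hf0 : (-1:ℂ)^(m+1-0) * ((m+1).choose 0 : ℂ) * (((0:ℕ):ℂ)-1)^m = -1 := by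
    simp only [Nat.sub_zero, Nat.choose_zero_right, Nat.cast_one, mul_one, Nat.cast_zero]
    rw [zero_sub, pow_succ]
    have h := hsq m
    linear_combination -h
  rw [hf0] at hG
  have hterm : ∀ k ∈ Finset.range (m+1),
      (-1:ℂ)^(m+1-(k+1)) * ((m+1).choose (k+1) : ℂ) * (((k+1:ℕ):ℂ)-1)^m
      = (-1:ℂ)^(m-k) * ((m+1).choose (k+1) : ℂ) * (k:ℂ)^m := by
    intro k _
    have h1 : m+1-(k+1) = m-k := by omega
    have h2 : ((k+1:ℕ):ℂ)-1 = (k:ℂ) := by push_cast; ring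
    rw [h1, h2]
  rw [Finset.sum_congr rfl hterm] at hG
  linear_combination hG


lemma coeffSum (n : ℕ) :
    ∑ p ∈ Finset.range (n+1), (-1:ℂ)^(n-p) * (p:ℂ)^n /
      (((p+1).factorial : ℂ) * ((n-p).factorial : ℂ)) = 1 / ((n+1).factorial : ℂ) := by
  have hstep : ∀ p ∈ Finset.range (n+1),
      (-1:ℂ)^(n-p) * (p:ℂ)^n / (((p+1).factorial : ℂ) * ((n-p).factorial : ℂ))
      = ((-1:ℂ)^(n-p) * ((n+1).choose (p+1) : ℂ) * (p:ℂ)^n) * (1 / ((n+1).factorial : ℂ)) := by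
    intro p hp
    have hple : p + 1 ≤ n + 1 := by simp at hp; omega
    have hfac : (n+1).choose (p+1) * ((p+1).factorial * (n-p).factorial) = (n+1).factorial := by
      have h := Nat.choose_mul_factorial_mul_factorial hple
      simpa [Nat.succ_sub_succ, mul_assoc] using h
    have hfacC : ((n+1).choose (p+1) : ℂ) * (((p+1).factorial : ℂ) * ((n-p).factorial : ℂ))
        = ((n+1).factorial : ℂ) := by exact_mod_cast congrArg (Nat.cast : ℕ → ℂ) hfac
    have h1 : ((p+1).factorial : ℂ) ≠ 0 := Nat.cast_ne_zero.2 (Nat.factorial_ne_zero _)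
    have h2 : ((n-p).factorial : ℂ) ≠ 0 := Nat.cast_ne_zero.2 (Nat.factorial_ne_zero _)
    have h3 : ((n+1).factorial : ℂ) ≠ 0 := Nat.cast_ne_zero.2 (Nat.factorial_ne_zero _)
    field_simp
    linear_combination (-(p:ℂ)^n) * hfacC
  rw [Finset.sum_congr rfl hstep, ← Finset.sum_mul, identB n, one_mul]

lemma fiberSum (w : ℂ) (n : ℕ) :
    ∑ pk ∈ Finset.HasAntidiagonal.antidiagonal n,
      (gammaCoeff pk.1 : ℂ) * w^(pk.1+1) * (-(pk.1:ℂ)*w)^pk.2 / (pk.2.factorial : ℂ)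
      = w^(n+1) / ((n+1).factorial : ℂ) := by
  rw [Finset.Nat.sum_antidiagonal_eq_sum_range_succ_mk]
  have hstep : ∀ p ∈ Finset.range (n+1),
      (gammaCoeff p : ℂ) * w^(p+1) * (-(p:ℂ)*w)^(n-p) / ((n-p).factorial : ℂ)
      = w^(n+1) * ((-1:ℂ)^(n-p) * (p:ℂ)^n /
          (((p+1).factorial : ℂ) * ((n-p).factorial : ℂ))) := by
    intro p hp
    have hple : p ≤ n := by simp at hp; omega
    have e1 : (p:ℂ)^p * (p:ℂ)^(n-p) = (p:ℂ)^n := by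
      rw [← pow_add, Nat.add_sub_cancel' hple]
    have e2 : w^(p+1) * w^(n-p) = w^(n+1) := by
      rw [← pow_add]; congr 1; omega
    have hgc : (gammaCoeff p : ℂ) = (p:ℂ)^p / (((p+1).factorial : ℕ) : ℂ) := by
      unfold gammaCoeff; push_cast; ring
    have h1 : ((p+1).factorial : ℂ) ≠ 0 := Nat.cast_ne_zero.2 (Nat.factorial_ne_zero _)
    have h2 : ((n-p).factorial : ℂ) ≠ 0 := Nat.cast_ne_zero.2 (Nat.factorial_ne_zero _)
    rw [hgc, neg_mul, neg_pow, mul_pow]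
    field_simp
    have e3 : w^p * w^(n-p) = w^n := by rw [← pow_add, Nat.add_sub_cancel' hple]
    linear_combination (w*w^p*w^(n-p))*e1 + (w*(p:ℂ)^n)*e3
  rw [Finset.sum_congr rfl hstep, ← Finset.mul_sum, coeffSum n, mul_one_div]

lemma gammaCoeff_nonneg (p : ℕ) : 0 ≤ gammaCoeff p :=
  div_nonneg (pow_nonneg (Nat.cast_nonneg p) p) (Nat.cast_nonneg _)

lemma gammaCoeff_le (p : ℕ) : gammaCoeff p ≤ Real.exp 1 ^ p := by
  have h1 : gammaCoeff p ≤ (p:ℝ)^p / p.factorial := by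
    apply div_le_div_of_nonneg_left (pow_nonneg (Nat.cast_nonneg p) p)
    · exact_mod_cast p.factorial_pos
    · exact_mod_cast Nat.factorial_le (Nat.le_succ p)
  have h2 : (p:ℝ)^p / p.factorial ≤ Real.exp p := by
    have hs := NormedSpace.expSeries_div_hasSum_exp (p:ℝ)
    rw [← Real.exp_eq_exp_ℝ] at hs
    exact le_hasSum hs p fun i _ =>
      div_nonneg (pow_nonneg (Nat.cast_nonneg p) i) (Nat.cast_nonneg _)
  calc gammaCoeff p ≤ (p:ℝ)^p / p.factorial := h1
    _ ≤ Real.exp p := h2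
    _ = Real.exp 1 ^ p := by rw [← Real.exp_nat_mul]; norm_num
/-- The function `L(t) = t/(1 − Σ_p γ(p)·t^{p+1})` has compositional inverse `z·e^{−z}`
near `0`: for `w` near `0`, `Σ_p γ(p)·(w·e^{−w})^{p+1}` converges to `1 − e^{−w}`. -/
theorem stmt11 :
    ∃ r : ℝ, 0 < r ∧ ∀ w : ℂ, ‖w‖ < r →
      HasSum (fun p : ℕ => (gammaCoeff p : ℂ) * (w * Complex.exp (-w)) ^ (p + 1))
        (1 - Complex.exp (-w)) := by
  refine ⟨1/8, by norm_num, fun w hw => ?_⟩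
  set a : ℕ × ℕ → ℂ := fun pk =>
    (gammaCoeff pk.1 : ℂ) * w^(pk.1+1) * (-(pk.1:ℂ)*w)^pk.2 / (pk.2.factorial : ℂ) with ha_def
  -- norm of each term
  have hnorm : ∀ pk : ℕ × ℕ, ‖a pk‖
      = gammaCoeff pk.1 * ‖w‖^(pk.1+1) * ((pk.1:ℝ)*‖w‖)^pk.2 / (pk.2.factorial : ℝ) := by
    intro pk
    simp only [ha_def, norm_div, norm_mul, norm_pow, Complex.norm_real, norm_neg,
      Complex.norm_natCast, Real.norm_eq_abs, abs_of_nonneg (gammaCoeff_nonneg pk.1)]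
  -- summability of norms
  have hfiber : ∀ p : ℕ, HasSum (fun k => gammaCoeff p * ‖w‖^(p+1) * ((p:ℝ)*‖w‖)^k / k.factorial)
      (gammaCoeff p * ‖w‖^(p+1) * Real.exp ((p:ℝ)*‖w‖)) := by
    intro p
    have hs := NormedSpace.expSeries_div_hasSum_exp ((p:ℝ)*‖w‖)
    rw [← Real.exp_eq_exp_ℝ] at hs
    have := hs.mul_left (gammaCoeff p * ‖w‖^(p+1))
    simpa [mul_div_assoc] using this
  have hsumnorm : Summable fun pk : ℕ × ℕ => ‖a pk‖ := by
    rw [show (fun pk : ℕ × ℕ => ‖a pk‖)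
        = fun pk : ℕ×ℕ => gammaCoeff pk.1 * ‖w‖^(pk.1+1) * ((pk.1:ℝ)*‖w‖)^pk.2 / pk.2.factorial
      from funext hnorm]
    rw [summable_prod_of_nonneg]
    · constructor
      · exact fun p => (hfiber p).summable
      · have hq1 : (0:ℝ) ≤ (1/8) * Real.exp 2 := by positivity
        have he2 : Real.exp 2 = Real.exp 1 ^ 2 := by
          rw [← Real.exp_nat_mul]; norm_num
        have hq2 : (1/8:ℝ) * Real.exp 2 < 1 := by
          rw [he2]; nlinarith [Real.exp_one_lt_d9, Real.exp_pos 1]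
        have key : ∀ p : ℕ,
            gammaCoeff p * ‖w‖^(p+1) * Real.exp ((p:ℝ)*‖w‖) ≤ ‖w‖ * ((1/8)*Real.exp 2)^p := by
          intro p
          have hb : Real.exp 1 * ‖w‖ * Real.exp ‖w‖ ≤ (1/8)*Real.exp 2 := by
            have h3 : Real.exp 1 * Real.exp ‖w‖ = Real.exp (1+‖w‖) := (Real.exp_add 1 ‖w‖).symm
            have h4 : Real.exp (1+‖w‖) ≤ Real.exp 2 :=
              Real.exp_le_exp.2 (by linarith [norm_nonneg w])
            nlinarith [Real.exp_pos 1, Real.exp_pos ‖w‖, norm_nonneg w]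
          have hbn : (0:ℝ) ≤ Real.exp 1 * ‖w‖ * Real.exp ‖w‖ := by positivity
          calc gammaCoeff p * ‖w‖^(p+1) * Real.exp ((p:ℝ)*‖w‖)
              = ‖w‖ * (gammaCoeff p * ‖w‖^p * (Real.exp ‖w‖)^p) := by
                rw [Real.exp_nat_mul, pow_succ]; ring
            _ ≤ ‖w‖ * ((Real.exp 1)^p * ‖w‖^p * (Real.exp ‖w‖)^p) := by
                have hg := gammaCoeff_le p
                gcongr
            _ = ‖w‖ * (Real.exp 1 * ‖w‖ * Real.exp ‖w‖)^p := by rw [mul_pow, mul_pow]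
            _ ≤ ‖w‖ * ((1/8)*Real.exp 2)^p := by
                gcongr
        have hgeo : Summable fun p : ℕ => ‖w‖ * ((1/8)*Real.exp 2)^p :=
          (summable_geometric_of_lt_one hq1 hq2).mul_left ‖w‖
        apply Summable.of_nonneg_of_le _ _ hgeo
        · intro p
          exact tsum_nonneg fun k => div_nonneg (mul_nonneg (mul_nonneg (gammaCoeff_nonneg _)
            (pow_nonneg (norm_nonneg w) _)) (pow_nonneg (by positivity) _)) (Nat.cast_nonneg _)
        · intro p
          rw [(hfiber p).tsum_eq]
          exact key p
    · intro pk
      exact div_nonneg (mul_nonneg (mul_nonneg (gammaCoeff_nonneg _)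
        (pow_nonneg (norm_nonneg w) _)) (pow_nonneg (by positivity) _)) (Nat.cast_nonneg _)
  have hsa : Summable a := Summable.of_norm hsumnorm
  have hT := hsa.hasSum
  set T := ∑' pk, a pk with hTdef
  -- fiberwise over p
  have hfibC : ∀ p : ℕ, HasSum (fun k => a (p, k))
      ((gammaCoeff p : ℂ) * w^(p+1) * Complex.exp (-(p:ℂ)*w)) := by
    intro p
    have hs := NormedSpace.expSeries_div_hasSum_exp (-(p:ℂ)*w)
    rw [← Complex.exp_eq_exp_ℂ] at hs
    simpa [ha_def, mul_div_assoc] using hs.mul_left ((gammaCoeff p : ℂ) * w^(p+1))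
  have hP : HasSum (fun p : ℕ => (gammaCoeff p : ℂ) * w^(p+1) * Complex.exp (-(p:ℂ)*w)) T :=
    hT.prod_fiberwise hfibC
  -- diagonal regrouping
  have hTe : HasSum (a ∘ Finset.HasAntidiagonal.sigmaAntidiagonalEquivProd) T :=
    (Equiv.hasSum_iff _).2 hT
  have hD : HasSum (fun n : ℕ => ∑ pk ∈ Finset.HasAntidiagonal.antidiagonal n, a pk) T := by
    refine hTe.sigma fun n => ?_
    rw [← Finset.sum_finset_coe]
    exact hasSum_fintype _
  have hD' : HasSum (fun n : ℕ => w^(n+1) / ((n+1).factorial : ℂ)) T := by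
    rwa [show (fun n : ℕ => ∑ pk ∈ Finset.HasAntidiagonal.antidiagonal n, a pk)
      = fun n : ℕ => w^(n+1) / ((n+1).factorial : ℂ) from funext fun n => fiberSum w n] at hD
  have hE : HasSum (fun n : ℕ => w^(n+1) / ((n+1).factorial : ℂ)) (Complex.exp w - 1) := by
    have hs := NormedSpace.expSeries_div_hasSum_exp w
    rw [← Complex.exp_eq_exp_ℂ] at hs
    refine (hasSum_nat_add_iff (f := fun n : ℕ => w^n / (n.factorial : ℂ)) 1).2 ?_
    simpa using hs
  have hTval : T = Complex.exp w - 1 := hD'.unique hE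
  rw [hTval] at hP
  have hfinal := hP.mul_right (Complex.exp (-w))
  have heq : (fun p : ℕ => (gammaCoeff p : ℂ) * w^(p+1) * Complex.exp (-(p:ℂ)*w)
      * Complex.exp (-w))
      = fun p : ℕ => (gammaCoeff p : ℂ) * (w * Complex.exp (-w)) ^ (p + 1) := by
    funext p
    rw [mul_pow, ← Complex.exp_nat_mul, mul_assoc, mul_assoc, ← Complex.exp_add]
    congr 2
    push_cast
    ring
  have hval : (Complex.exp w - 1) * Complex.exp (-w) = 1 - Complex.exp (-w) := by
    rw [sub_mul, ← Complex.exp_add, add_neg_cancel, Complex.exp_zero, one_mul]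
  rw [heq, hval] at hfinal
  exact hfinal
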